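/- (Hahn–Banach for order-preserving functionals) Let $L$ be a partially ordered vector space with distinguished interior point $x_0$ of the positive cone, and let $B$ be an $A$-subspace of $L$ with respect to $x_0$. Then every weakly additive, order-preserving functional $f\colon B \to \mathbb{R}$ extends to a weakly additive, order-preserving functional $f_0\colon L \to \mathbb{R}$ with $f_0|_B = f$. -/

import Mathlib

def InnerSeg {L : Type*} [AddCommGroup L] [Module ℝ L] (a b x : L) : Prop :=
  x ∈ segment ℝ a b ∧ x ≠ a ∧ x ≠ b

def InnerPoint {L : Type*} [AddCommGroup L] [Module ℝ L] (S : Set L) (x : L) : Prop :=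
  x ∈ S ∧ ∀ a b : L, InnerSeg a b x →
    ∃ c d : L, c ∈ segment ℝ a b ∩ S ∧ d ∈ segment ℝ a b ∩ S ∧ InnerSeg c d x

def coneNbhd {L : Type*} [AddCommGroup L] [PartialOrder L] [Module ℝ L]
    (x₀ z : L) (δ : ℝ) : Set L :=
  {y : L | InnerPoint {v : L | 0 ≤ v} (δ • x₀ + (y - z)) ∧
           InnerPoint {v : L | 0 ≤ v} (δ • x₀ - (y - z))}

def coneTop {L : Type*} [AddCommGroup L] [PartialOrder L] [Module ℝ L]
    (x₀ : L) : TopologicalSpace L :=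
  TopologicalSpace.generateFrom {s : Set L | ∃ z : L, ∃ δ : ℝ, 0 < δ ∧ s = coneNbhd x₀ z δ}

def WeaklyAdditive {L : Type*} [AddCommGroup L] [Module ℝ L] (x₀ : L) (f : L → ℝ) : Prop :=
  ∀ x : L, ∀ l : ℝ, f (x + l • x₀) = f x + l * f x₀


def IsASubspace {L : Type*} [AddCommGroup L] [Module ℝ L] (x₀ : L) (B : Set L) : Prop :=
  (0 : L) ∈ B ∧ ∀ x ∈ B, ∀ l : ℝ, x + l • x₀ ∈ B

theorem order_unit_aux {L : Type*} [AddCommGroup L] [PartialOrder L] [IsOrderedAddMonoid L] [Module ℝ L] [PosSMulStrictMono ℝ L]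
    (x₀ : L)
    (hx₀ : (0:L) ≤ x₀ ∧ ∀ a b : L, (x₀ ∈ segment ℝ a b ∧ x₀ ≠ a ∧ x₀ ≠ b) →
      ∃ c d : L, c ∈ segment ℝ a b ∩ {v : L | 0 ≤ v} ∧ d ∈ segment ℝ a b ∩ {v : L | 0 ≤ v} ∧
        (x₀ ∈ segment ℝ c d ∧ x₀ ≠ c ∧ x₀ ≠ d)) (x : L) :
    ∃ l : ℝ, x ≤ l • x₀ := by
  rcases eq_or_ne x 0 with rfl | hx
  · exact ⟨0, by simp⟩
  obtain ⟨c, d, ⟨hcseg, hc0⟩, ⟨hdseg, hd0⟩, hxseg, hxc, hxd⟩ :=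
    hx₀.2 (x₀ - x) (x₀ + x) ⟨⟨1/2, 1/2, by norm_num, by norm_num, by norm_num, by module⟩,
      by intro h; exact hx (by simpa using sub_eq_self.mp h.symm),
      by intro h; exact hx (by simpa using (left_eq_add.mp h))⟩
  obtain ⟨u, v, hu, hv, huv, hc⟩ := hcseg
  obtain ⟨u', v', hu', hv', huv', hd⟩ := hdseg
  have hcs : c = x₀ + (v - u) • x := by
    rw [← hc]
    have h1 : u • (x₀ - x) + v • (x₀ + x) = (u + v) • x₀ + (v - u) • x := by module
    rw [h1, huv, one_smul]
  have hdt : d = x₀ + (v' - u') • x := by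
    rw [← hd]
    have h1 : u' • (x₀ - x) + v' • (x₀ + x) = (u' + v') • x₀ + (v' - u') • x := by module
    rw [h1, huv', one_smul]
  set s := v - u with hs_def
  set t := v' - u' with ht_def
  obtain ⟨p, q, hp, hq, hpq, hx0⟩ := hxseg
  have key : (p * s + q * t) • x = 0 := by
    have h1 : (p * s + q * t) • x = (p • c + q • d) - (p + q) • x₀ := by
      rw [hcs, hdt]; module
    rw [h1, hx0, hpq, one_smul, sub_self]
  have hs : s ≠ 0 := by rintro h; rw [h] at hcs; exact hxc (by simpa using hcs.symm)
  have ht : t ≠ 0 := by rintro h; rw [h] at hdt; exact hxd (by simpa using hdt.symm)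
  have hst : p * s + q * t = 0 := by
    rcases smul_eq_zero.mp key with h | h
    · exact h
    · exact absurd h hx
  -- get w < 0 with 0 ≤ x₀ + w • x
  have hmain : ∃ w : ℝ, w < 0 ∧ (0:L) ≤ x₀ + w • x := by
    rcases hs.lt_or_gt with hsneg | hspos
    · exact ⟨s, hsneg, by rw [← hcs]; exact hc0⟩
    · have htneg : t < 0 := by
        rcases ht.lt_or_gt with h | h
        · exact h
        · exfalso
          have h1 : p * s = 0 := le_antisymm (by nlinarith [mul_nonneg hq h.le]) (mul_nonneg hp hspos.le)
          have h2 : q * t = 0 := by linarith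
          have hp0 : p = 0 := by
            rcases mul_eq_zero.mp h1 with h' | h'
            · exact h'
            · exact absurd h' hs
          have hq0 : q = 0 := by
            rcases mul_eq_zero.mp h2 with h' | h'
            · exact h'
            · exact absurd h' ht
          linarith
      exact ⟨t, htneg, by rw [← hdt]; exact hd0⟩
  obtain ⟨w, hw, hwx⟩ := hmain
  refine ⟨(-w)⁻¹, ?_⟩
  have h1 : (-w) • x ≤ x₀ := by
    have h := add_le_add_left hwx (-(w • x))
    simpa [neg_smul] using h
  have h2 := smul_le_smul_of_nonneg_left h1 (inv_nonneg.mpr (by linarith : (0:ℝ) ≤ -w))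
  rwa [smul_smul, inv_mul_cancel₀ (by linarith : (-w) ≠ 0), one_smul] at h2

theorem stmt9 {L : Type*} [AddCommGroup L] [PartialOrder L] [IsOrderedAddMonoid L] [Module ℝ L] [PosSMulStrictMono ℝ L]
    (x₀ : L) (hx₀ : InnerPoint {v : L | 0 ≤ v} x₀)
    (B : Set L) (hB : IsASubspace x₀ B)
    (f : L → ℝ)
    (hwa : ∀ x ∈ B, ∀ l : ℝ, f (x + l • x₀) = f x + l * f x₀)
    (hmono : ∀ x ∈ B, ∀ y ∈ B, x ≤ y → f x ≤ f y) :
    ∃ f₀ : L → ℝ, WeaklyAdditive x₀ f₀ ∧ Monotone f₀ ∧ ∀ x ∈ B, f₀ x = f x := by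
  have hunit : ∀ x : L, ∃ l : ℝ, x ≤ l • x₀ := order_unit_aux x₀ hx₀
  rcases eq_or_ne x₀ 0 with rfl | hx₀ne
  · -- degenerate case: the whole space is trivial
    have htriv : ∀ x : L, x = 0 := by
      intro x
      obtain ⟨l, hl⟩ := hunit x
      obtain ⟨m, hm⟩ := hunit (-x)
      simp only [smul_zero] at hl hm
      exact le_antisymm hl (neg_nonpos.mp hm)
    have hf0 : f 0 = 0 := by
      have h := hwa 0 hB.1 1
      simp at h
      linarith
    refine ⟨fun _ => 0, ?_, ?_, ?_⟩
    · intro x l; simp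
    · intro a b _; exact le_refl 0
    · intro x hx; rw [htriv x, hf0]
  -- main case
  have hx0B : x₀ ∈ B := by simpa using hB.2 0 hB.1 1
  have he : 0 ≤ f x₀ := by
    have hnegB : -x₀ ∈ B := by simpa using hB.2 0 hB.1 (-1)
    have h1 : f (0 + (-1:ℝ) • x₀) = f 0 + (-1) * f x₀ := hwa 0 hB.1 (-1)
    simp only [zero_add, neg_smul, one_smul] at h1
    have h2 : f (-x₀) ≤ f 0 := hmono _ hnegB 0 hB.1 (neg_nonpos.mpr hx₀.1)
    linarith
  have hpos : ∀ l : ℝ, 0 ≤ l • x₀ → 0 ≤ l := by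
    intro l hl
    by_contra hl'
    push_neg at hl'
    have h1 : (0:L) ≤ (-l)⁻¹ • (l • x₀) := by
      have h := smul_le_smul_of_nonneg_left hl (inv_nonneg.mpr (by linarith : (0:ℝ) ≤ -l))
      simpa using h
    have h2 : (-l)⁻¹ • (l • x₀) = -x₀ := by
      rw [smul_smul]
      have hl0 : l ≠ 0 := ne_of_lt hl'
      have : (-l)⁻¹ * l = -1 := by field_simp
      rw [this]; simp
    rw [h2] at h1
    exact hx₀ne (le_antisymm (neg_nonneg.mp h1) hx₀.1)
  -- Zorn's lemma on graphs of partial extensions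
  set 𝒮 : Set (Set (L × ℝ)) :=
    {G | (∀ x ∈ B, (x, f x) ∈ G) ∧
         (∀ p ∈ G, ∀ l : ℝ, (p.1 + l • x₀, p.2 + l * f x₀) ∈ G) ∧
         (∀ p ∈ G, ∀ q ∈ G, p.1 ≤ q.1 → p.2 ≤ q.2)} with h𝒮
  have hG₀ : {p : L × ℝ | p.1 ∈ B ∧ p.2 = f p.1} ∈ 𝒮 := by
    refine ⟨fun x hx => ⟨hx, rfl⟩, ?_, ?_⟩
    · rintro p ⟨hp1, hp2⟩ l
      exact ⟨hB.2 p.1 hp1 l, by rw [hwa p.1 hp1 l, hp2]⟩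
    · rintro p ⟨hp1, hp2⟩ q ⟨hq1, hq2⟩ hle
      rw [hp2, hq2]
      exact hmono p.1 hp1 q.1 hq1 hle
  have hchainUB : ∀ c ⊆ 𝒮, IsChain (· ⊆ ·) c → c.Nonempty → ∃ ub ∈ 𝒮, ∀ s ∈ c, s ⊆ ub := by
    intro c hcS hchain hcne
    obtain ⟨G₁, hG₁⟩ := hcne
    refine ⟨⋃₀ c, ⟨?_, ?_, ?_⟩, fun s hs => Set.subset_sUnion_of_mem hs⟩
    · intro x hx; exact ⟨G₁, hG₁, (hcS hG₁).1 x hx⟩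
    · rintro p ⟨G', hG', hp⟩ l; exact ⟨G', hG', (hcS hG').2.1 p hp l⟩
    · rintro p ⟨Ga, hGa, hp⟩ q ⟨Gb, hGb, hq⟩ hle
      rcases hchain.total hGa hGb with h | h
      · exact (hcS hGb).2.2 p (h hp) q hq hle
      · exact (hcS hGa).2.2 p hp q (h hq) hle
  obtain ⟨G, -, hGmax⟩ := zorn_subset_nonempty 𝒮 hchainUB _ hG₀
  have hGS : G ∈ 𝒮 := hGmax.1
  -- totality of the maximal graph
  have htot : ∀ z : L, ∃ r : ℝ, (z, r) ∈ G := by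
    by_contra hcon
    push_neg at hcon
    obtain ⟨z, hz⟩ := hcon
    set S0 : Set ℝ := {v : ℝ | ∃ p ∈ G, ∃ l : ℝ, p.1 ≤ z + l • x₀ ∧ v = p.2 - l * f x₀} with hS0
    have h0G : ((0:L), f 0) ∈ G := hGS.1 0 hB.1
    have hne : S0.Nonempty := by
      obtain ⟨m, hm⟩ := hunit (-z)
      have hp : ((0:L) + (-m) • x₀, f 0 + (-m) * f x₀) ∈ G := hGS.2.1 _ h0G (-m)
      refine ⟨f 0 + (-m) * f x₀ - 0 * f x₀, _, hp, 0, ?_, rfl⟩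
      simp only [zero_add, zero_smul, add_zero, neg_smul]
      exact neg_le.mp hm
    have hbdd : BddAbove S0 := by
      obtain ⟨lam, hlam⟩ := hunit z
      refine ⟨f 0 + lam * f x₀, ?_⟩
      rintro v ⟨p, hp, l, hple, rfl⟩
      have hq : ((0:L) + (lam + l) • x₀, f 0 + (lam + l) * f x₀) ∈ G := hGS.2.1 _ h0G (lam + l)
      have h1 : p.1 ≤ (0:L) + (lam + l) • x₀ := by
        refine hple.trans ?_
        have h2 : z + l • x₀ ≤ lam • x₀ + l • x₀ := add_le_add_left hlam _
        refine h2.trans_eq ?_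
        module
      have h3 := hGS.2.2 p hp _ hq h1
      simp only at h3
      linarith
    set cc := sSup S0 with hcc
    have hub : ∀ p ∈ G, ∀ l : ℝ, p.1 ≤ z + l • x₀ → p.2 - l * f x₀ ≤ cc :=
      fun p hp l hle => le_csSup hbdd ⟨p, hp, l, hle, rfl⟩
    have hlb : ∀ p ∈ G, ∀ l : ℝ, z + l • x₀ ≤ p.1 → cc ≤ p.2 - l * f x₀ := by
      intro p hp l hle
      refine csSup_le hne ?_
      rintro v ⟨q, hq, m, hqle, rfl⟩
      have hr : (p.1 + (m - l) • x₀, p.2 + (m - l) * f x₀) ∈ G := hGS.2.1 _ hp (m - l)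
      have h1 : q.1 ≤ p.1 + (m - l) • x₀ := by
        refine hqle.trans ?_
        have h2 : z + m • x₀ = (z + l • x₀) + (m - l) • x₀ := by module
        rw [h2]
        exact add_le_add_left hle _
      have h3 := hGS.2.2 q hq _ hr h1
      simp only at h3
      linarith
    set G' : Set (L × ℝ) := G ∪ {q : L × ℝ | ∃ l : ℝ, q = (z + l • x₀, cc + l * f x₀)} with hG'
    have hG'S : G' ∈ 𝒮 := by
      refine ⟨fun x hx => Or.inl (hGS.1 x hx), ?_, ?_⟩
      · rintro p (hp | ⟨l, rfl⟩) l'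
        · exact Or.inl (hGS.2.1 p hp l')
        · refine Or.inr ⟨l + l', ?_⟩
          simp only [Prod.mk.injEq]
          constructor
          · module
          · ring
      · rintro p (hp | ⟨l, rfl⟩) q (hq | ⟨m, rfl⟩) hle
        · exact hGS.2.2 p hp q hq hle
        · have := hub p hp m hle
          simp only
          linarith
        · have := hlb q hq l hle
          simp only at hle ⊢
          linarith
        · simp only at hle ⊢
          have h1 : (0:L) ≤ (m - l) • x₀ := by
            have h2 : (z + m • x₀) - (z + l • x₀) = (m - l) • x₀ := by module
            rw [← h2]
            exact sub_nonneg.mpr hle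
          have h3 : l ≤ m := by have := hpos _ h1; linarith
          nlinarith
    have hGsub : G ⊆ G' := Set.subset_union_left
    have : G' ⊆ G := hGmax.2 hG'S hGsub
    exact hz cc (this (Or.inr ⟨0, by simp⟩))
  have hf₀ : ∀ x : L, (x, Classical.choose (htot x)) ∈ G := fun x => Classical.choose_spec (htot x)
  set f₀ : L → ℝ := fun x => Classical.choose (htot x) with hf₀def
  have hfun : ∀ p ∈ G, ∀ q ∈ G, p.1 = q.1 → p.2 = q.2 := fun p hp q hq h =>
    le_antisymm (hGS.2.2 p hp q hq h.le) (hGS.2.2 q hq p hp h.ge)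
  have hx0val : f₀ x₀ = f x₀ := hfun (x₀, f₀ x₀) (hf₀ x₀) (x₀, f x₀) (hGS.1 x₀ hx0B) rfl
  refine ⟨f₀, ?_, ?_, ?_⟩
  · intro x l
    rw [hx0val]
    have h1 := hGS.2.1 (x, f₀ x) (hf₀ x) l
    exact hfun _ (hf₀ _) _ h1 rfl
  · intro a b hab
    exact hGS.2.2 _ (hf₀ a) _ (hf₀ b) hab
  · intro x hx
    exact hfun _ (hf₀ x) _ (hGS.1 x hx) rfl
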